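/- Let A be a finite abelian group with character group A* = Hom(A, ℂˣ), and let Ã = A × A*. Let G be a group, ρ : G → Aut(A) a homomorphism, and let G̃ = G ⋉ A* act on Ã by (χ, g)·(a, ψ) = (ρ(g)(a), ψ ∘ ρ(g)⁻¹). Then the element J = |A|⁻¹ Σ_{x ∈ A, χ ∈ A*} χ(x) · (x, 1) ⊗ (1, χ) ∈ ℂ[Ã] ⊗ ℂ[Ã] is a twist for ℂ[Ã] (in particular invertible, with J⁻¹ = |A|⁻¹ Σ_{x,χ} χ(x)⁻¹ (x,1) ⊗ (1,χ)), and J is invariant under the action of G̃: applying the linear extension of the action of any element of G̃ to both tensor factors of J returns J. -/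

import Mathlib

open TensorProduct

noncomputable section

variable (G : Type*) [Group G]

/-- Comultiplication on the group algebra `ℂ[G]`, determined by `Δ(g) = g ⊗ g`. -/
def GroupAlgebra.comul :
    MonoidAlgebra ℂ G →ₐ[ℂ] MonoidAlgebra ℂ G ⊗[ℂ] MonoidAlgebra ℂ G :=
  (MonoidAlgebra.lift ℂ _ G)
    { toFun := fun g => MonoidAlgebra.of ℂ G g ⊗ₜ[ℂ] MonoidAlgebra.of ℂ G g
      map_one' := by simp [Algebra.TensorProduct.one_def, MonoidAlgebra.one_def]
      map_mul' := fun g h => by simp [Algebra.TensorProduct.tmul_mul_tmul] }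

/-- Counit on the group algebra `ℂ[G]`, determined by `ε(g) = 1`. -/
def GroupAlgebra.counit : MonoidAlgebra ℂ G →ₐ[ℂ] ℂ :=
  (MonoidAlgebra.lift ℂ ℂ G) 1

/-- The equation `((Δ ⊗ id)(J))·(J ⊗ 1) = ((id ⊗ Δ)(J))·(1 ⊗ J)` in `ℂ[G] ⊗ ℂ[G] ⊗ ℂ[G]`. -/
def GroupAlgebra.TwistEq (J : MonoidAlgebra ℂ G ⊗[ℂ] MonoidAlgebra ℂ G) : Prop :=
  (Algebra.TensorProduct.assoc ℂ ℂ ℂ (MonoidAlgebra ℂ G) (MonoidAlgebra ℂ G) (MonoidAlgebra ℂ G))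
      ((Algebra.TensorProduct.map (GroupAlgebra.comul G) (AlgHom.id ℂ (MonoidAlgebra ℂ G))) J) *
    (Algebra.TensorProduct.assoc ℂ ℂ ℂ (MonoidAlgebra ℂ G) (MonoidAlgebra ℂ G) (MonoidAlgebra ℂ G))
      (J ⊗ₜ[ℂ] (1 : MonoidAlgebra ℂ G)) =
  (Algebra.TensorProduct.map (AlgHom.id ℂ (MonoidAlgebra ℂ G)) (GroupAlgebra.comul G)) J *
    ((1 : MonoidAlgebra ℂ G) ⊗ₜ[ℂ] J)

/-- The equations `(ε ⊗ id)(J) = 1` and `(id ⊗ ε)(J) = 1`. -/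
def GroupAlgebra.CounitEq (J : MonoidAlgebra ℂ G ⊗[ℂ] MonoidAlgebra ℂ G) : Prop :=
  (Algebra.TensorProduct.lid ℂ (MonoidAlgebra ℂ G))
      ((Algebra.TensorProduct.map (GroupAlgebra.counit G) (AlgHom.id ℂ (MonoidAlgebra ℂ G))) J) = 1 ∧
  (Algebra.TensorProduct.rid ℂ ℂ (MonoidAlgebra ℂ G))
      ((Algebra.TensorProduct.map (AlgHom.id ℂ (MonoidAlgebra ℂ G)) (GroupAlgebra.counit G)) J) = 1

/-- A twist for the group algebra `ℂ[G]`: an invertible element of `ℂ[G] ⊗ ℂ[G]` satisfying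
`((Δ ⊗ id)(J))·(J ⊗ 1) = ((id ⊗ Δ)(J))·(1 ⊗ J)` and `(ε ⊗ id)(J) = (id ⊗ ε)(J) = 1`. -/
def GroupAlgebra.IsTwist (J : MonoidAlgebra ℂ G ⊗[ℂ] MonoidAlgebra ℂ G) : Prop :=
  IsUnit J ∧ GroupAlgebra.TwistEq G J ∧ GroupAlgebra.CounitEq G J

end

/-- The `ℂ`-linear map `ℂ[A] → ℂ[G]` sending the basis element `a` to `p a`. -/
noncomputable def GroupAlgebra.transport (A G : Type*) [Group A] [Group G] (p : A → G) :
    MonoidAlgebra ℂ A →ₗ[ℂ] MonoidAlgebra ℂ G :=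
  MonoidAlgebra.mapDomainLinearMap ℂ ℂ p

/-- The statement `u · v = 1` in the algebra `ℂ[G] ⊗ ℂ[G]`. -/
noncomputable def GroupAlgebra.MulEqOne (G : Type*) [Group G]
    (u v : MonoidAlgebra ℂ G ⊗[ℂ] MonoidAlgebra ℂ G) : Prop := u * v = 1

/-- The statement `u · v = w` in the algebra `ℂ[G] ⊗ ℂ[G]`. -/
noncomputable def GroupAlgebra.MulEq (G : Type*) [Group G]
    (u v w : MonoidAlgebra ℂ G ⊗[ℂ] MonoidAlgebra ℂ G) : Prop := u * v = w

/-- The element `J = |A|⁻¹ Σ_{x ∈ A, χ ∈ A*} χ(x)^s (x,1) ⊗ (1,χ)` of `ℂ[Ã] ⊗ ℂ[Ã]`, where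
`Ã = A × A*` and `A* = Hom(A, ℂˣ)`; `s = 1` gives the twist `J` of Section 4 and `s = -1`
gives its inverse. -/
noncomputable def GroupAlgebra.fourierTwist (A : Type*) [CommGroup A] [Fintype A]
    [Fintype (A →* ℂˣ)] (s : ℤ) :
    MonoidAlgebra ℂ (A × (A →* ℂˣ)) ⊗[ℂ] MonoidAlgebra ℂ (A × (A →* ℂˣ)) :=
  (Fintype.card A : ℂ)⁻¹ •
    ∑ x : A, ∑ χ : A →* ℂˣ,
      (((χ x ^ s : ℂˣ) : ℂ)) •
        (MonoidAlgebra.of ℂ (A × (A →* ℂˣ)) (x, 1) ⊗ₜ[ℂ]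
          MonoidAlgebra.of ℂ (A × (A →* ℂˣ)) (1, χ))
set_option maxSynthPendingDepth 3
set_option synthInstance.maxHeartbeats 400000
set_option maxHeartbeats 1000000
set_option linter.unusedSectionVars false

namespace FourierAux
open Finset TensorProduct

lemma comul_of {G : Type*} [Group G] (g : G) :
    GroupAlgebra.comul G (MonoidAlgebra.of ℂ G g)
      = MonoidAlgebra.of ℂ G g ⊗ₜ[ℂ] MonoidAlgebra.of ℂ G g := by
  simp [GroupAlgebra.comul, MonoidAlgebra.lift_of]

lemma counit_of {G : Type*} [Group G] (g : G) :
    GroupAlgebra.counit G (MonoidAlgebra.of ℂ G g) = 1 := by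
  simp [GroupAlgebra.counit, MonoidAlgebra.lift_of]

variable {A : Type*} [CommGroup A] [Fintype A]

lemma hasEnough : HasEnoughRootsOfUnity ℂ (Monoid.exponent A) := by
  haveI : NeZero ((Monoid.exponent A : ℂ)) :=
    ⟨Nat.cast_ne_zero.mpr Monoid.exponent_ne_zero_of_finite⟩
  infer_instance

open scoped Classical in
lemma charSum (χ : A →* ℂˣ) :
    ∑ a : A, ((χ a : ℂ)) = if χ = 1 then (Fintype.card A : ℂ) else 0 := by
  split_ifs with h
  · subst h; simp
  · have h' : (Units.coeHom ℂ).comp χ ≠ 1 := by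
      intro hc
      apply h
      ext a
      have := DFunLike.congr_fun hc a
      simpa using this
    simpa using sum_hom_units_eq_zero ((Units.coeHom ℂ).comp χ) h'

variable [Fintype (A →* ℂˣ)]

lemma cardDual : Fintype.card (A →* ℂˣ) = Fintype.card A := by
  haveI := hasEnough (A := A)
  obtain ⟨e⟩ := CommGroup.monoidHom_mulEquiv_of_hasEnoughRootsOfUnity A ℂ
  exact Fintype.card_congr e.toEquiv

/-- evaluation at `a` as a monoid hom `(A →* ℂˣ) →* ℂ`. -/
noncomputable def evalHom (a : A) : (A →* ℂˣ) →* ℂ where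
  toFun χ := χ a
  map_one' := by simp
  map_mul' χ ψ := by simp

open scoped Classical in
lemma dualSum (a : A) :
    ∑ χ : A →* ℂˣ, ((χ a : ℂ)) = if a = 1 then (Fintype.card A : ℂ) else 0 := by
  split_ifs with h
  · subst h; simp [cardDual]
  · haveI := hasEnough (A := A)
    obtain ⟨φ, hφ⟩ := CommGroup.exists_apply_ne_one_of_hasEnoughRootsOfUnity A ℂ h
    have h' : evalHom a ≠ 1 := by
      intro hc
      apply hφ
      have := DFunLike.congr_fun hc φ
      exact Units.ext (by simpa [evalHom] using this)
    simpa [evalHom] using sum_hom_units_eq_zero (evalHom a) h'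

/-- `E x χ = (x,1) ⊗ (1,χ)` as an element of `ℂ[Ã] ⊗ ℂ[Ã]`. -/
noncomputable def E (x : A) (χ : A →* ℂˣ) :
    MonoidAlgebra ℂ (A × (A →* ℂˣ)) ⊗[ℂ] MonoidAlgebra ℂ (A × (A →* ℂˣ)) :=
  MonoidAlgebra.of ℂ (A × (A →* ℂˣ)) (x, 1) ⊗ₜ[ℂ] MonoidAlgebra.of ℂ (A × (A →* ℂˣ)) (1, χ)

lemma E_mul (x y : A) (χ ψ : A →* ℂˣ) : E x χ * E y ψ = E (x * y) (χ * ψ) := by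
  simp only [E, Algebra.TensorProduct.tmul_mul_tmul, ← map_mul, Prod.mk_mul_mk, one_mul, mul_one]

lemma E_one : (E 1 1 : MonoidAlgebra ℂ (A × (A →* ℂˣ)) ⊗[ℂ] MonoidAlgebra ℂ (A × (A →* ℂˣ))) = 1 := by
  rw [E, Prod.mk_one_one, map_one]
  exact (Algebra.TensorProduct.one_def).symm

lemma tw (s : ℤ) : GroupAlgebra.fourierTwist A s =
    (Fintype.card A : ℂ)⁻¹ • ∑ p : A × (A →* ℂˣ), (((p.2 p.1 ^ s : ℂˣ) : ℂ)) • E p.1 p.2 := by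
  rw [GroupAlgebra.fourierTwist]
  congr 1
  rw [Fintype.sum_prod_type]
  rfl

open scoped Classical in
lemma scal (y : A) (ψ : A →* ℂˣ) :
    ∑ p : A × (A →* ℂˣ),
        (((p.2 p.1 : ℂˣ) : ℂ) * ((((p⁻¹ * (y, ψ)).2 ((p⁻¹ * (y, ψ)).1) : ℂˣ) : ℂ))⁻¹)
      = ((ψ y : ℂ))⁻¹ * ((∑ x : A, ((ψ x : ℂ))) * (∑ χ : A →* ℂˣ, ((χ y : ℂ)))) := by
  rw [Fintype.sum_prod_type]
  simp only [Finset.mul_sum, Finset.sum_mul]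
  rw [Finset.sum_comm (γ := A →* ℂˣ)]
  apply Finset.sum_congr rfl
  intro x _
  apply Finset.sum_congr rfl
  intro χ _
  have h1 : ((χ x : ℂ)) ≠ 0 := Units.ne_zero _
  have h2 : ((χ y : ℂ)) ≠ 0 := Units.ne_zero _
  have h3 : ((ψ x : ℂ)) ≠ 0 := Units.ne_zero _
  have h4 : ((ψ y : ℂ)) ≠ 0 := Units.ne_zero _
  simp only [Prod.inv_mk, Prod.mk_mul_mk, MonoidHom.mul_apply, MonoidHom.inv_apply,
    map_mul, map_inv, Units.val_mul, Units.val_inv_eq_inv_val]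
  field_simp

open scoped Classical in
lemma J_mul_J : GroupAlgebra.fourierTwist A 1 * GroupAlgebra.fourierTwist A (-1) = 1 := by
  have hA : (Fintype.card A : ℂ) ≠ 0 := Nat.cast_ne_zero.mpr Fintype.card_ne_zero
  rw [tw, tw, smul_mul_smul_comm, Finset.sum_mul_sum]
  simp only [smul_mul_smul_comm, E_mul, zpow_one, zpow_neg, Units.val_inv_eq_inv_val]
  have hre : ∀ p : A × (A →* ℂˣ),
      (∑ q : A × (A →* ℂˣ),
          (((p.2 p.1 : ℂˣ) : ℂ) * (((q.2 q.1 : ℂˣ) : ℂ))⁻¹) • E (p.1 * q.1) (p.2 * q.2))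
      = ∑ q : A × (A →* ℂˣ),
          (((p.2 p.1 : ℂˣ) : ℂ) * ((((p⁻¹ * q).2 ((p⁻¹ * q).1) : ℂˣ) : ℂ))⁻¹) • E q.1 q.2 := by
    intro p
    apply Fintype.sum_bijective (fun q => p * q) (Group.mulLeft_bijective p)
    intro q
    simp [inv_mul_cancel_left, Prod.fst_mul, Prod.snd_mul]
  simp only [hre]
  rw [Finset.sum_comm]
  have hcol : ∀ q : A × (A →* ℂˣ),
      (∑ p : A × (A →* ℂˣ),
          (((p.2 p.1 : ℂˣ) : ℂ) * ((((p⁻¹ * q).2 ((p⁻¹ * q).1) : ℂˣ) : ℂ))⁻¹) • E q.1 q.2)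
      = (((q.2 q.1 : ℂ))⁻¹ * ((if q.2 = 1 then (Fintype.card A : ℂ) else 0) *
          (if q.1 = 1 then (Fintype.card A : ℂ) else 0))) • E q.1 q.2 := by
    intro q
    rw [← Finset.sum_smul]
    congr 1
    have := scal q.1 q.2
    rw [show ((q.1, q.2) : A × (A →* ℂˣ)) = q from rfl] at this
    rw [this, charSum, dualSum]
  simp only [hcol]
  rw [Fintype.sum_eq_single (1 : A × (A →* ℂˣ))]
  · simp only [Prod.fst_one, Prod.snd_one, MonoidHom.one_apply, Units.val_one, inv_one,
      one_mul, reduceIte, E_one, smul_smul]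
    have hA2 : (Fintype.card A : ℂ)⁻¹ * (Fintype.card A : ℂ)⁻¹ *
        ((Fintype.card A : ℂ) * (Fintype.card A : ℂ)) = 1 := by field_simp
    rw [hA2, one_smul]
  · intro q hq
    have hne : ¬(q.1 = 1 ∧ q.2 = 1) := by
      intro h; exact hq (Prod.ext h.1 h.2)
    by_cases h1 : q.1 = 1
    · have h2 : q.2 ≠ 1 := fun h => hne ⟨h1, h⟩
      simp [h1, h2]
    · simp [h1]

lemma J_mul_J' : GroupAlgebra.fourierTwist A (-1) * GroupAlgebra.fourierTwist A 1 = 1 := by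
  rw [mul_comm]; exact J_mul_J

lemma counitEq : GroupAlgebra.CounitEq (A × (A →* ℂˣ)) (GroupAlgebra.fourierTwist A 1) := by
  classical
  have hA : (Fintype.card A : ℂ) ≠ 0 := Nat.cast_ne_zero.mpr Fintype.card_ne_zero
  have h1 : (1 : MonoidAlgebra ℂ (A × (A →* ℂˣ)))
      = MonoidAlgebra.of ℂ (A × (A →* ℂˣ)) (1, 1) := by
    rw [Prod.mk_one_one, map_one]
  constructor
  · rw [tw]
    simp only [map_smul, map_sum, E, Algebra.TensorProduct.map_tmul, AlgHom.coe_id, id_eq,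
      counit_of, Algebra.TensorProduct.lid_tmul, one_smul, zpow_one]
    rw [Fintype.sum_prod_type, Finset.sum_comm]
    have : ∀ χ : A →* ℂˣ,
        (∑ x : A, ((χ x : ℂ)) • MonoidAlgebra.of ℂ (A × (A →* ℂˣ)) (1, χ))
        = (if χ = 1 then (Fintype.card A : ℂ) else 0) •
            MonoidAlgebra.of ℂ (A × (A →* ℂˣ)) (1, χ) := by
      intro χ
      rw [← Finset.sum_smul, charSum]
    simp only [this]
    rw [Fintype.sum_eq_single (1 : A →* ℂˣ)]
    · rw [if_pos rfl, smul_smul, ← h1]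
      have : (Fintype.card A : ℂ)⁻¹ * (Fintype.card A : ℂ) = 1 := by field_simp
      rw [this, one_smul]
    · intro χ hχ
      simp [hχ]
  · rw [tw]
    simp only [map_smul, map_sum, E, Algebra.TensorProduct.map_tmul, AlgHom.coe_id, id_eq,
      counit_of, Algebra.TensorProduct.rid_tmul, one_smul, zpow_one]
    rw [Fintype.sum_prod_type]
    have : ∀ x : A,
        (∑ χ : A →* ℂˣ, ((χ x : ℂ)) • MonoidAlgebra.of ℂ (A × (A →* ℂˣ)) (x, 1))
        = (if x = 1 then (Fintype.card A : ℂ) else 0) •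
            MonoidAlgebra.of ℂ (A × (A →* ℂˣ)) (x, 1) := by
      intro x
      rw [← Finset.sum_smul, dualSum]
    simp only [this]
    rw [Fintype.sum_eq_single (1 : A)]
    · rw [if_pos rfl, smul_smul, ← h1]
      have : (Fintype.card A : ℂ)⁻¹ * (Fintype.card A : ℂ) = 1 := by field_simp
      rw [this, one_smul]
    · intro x hx
      simp [hx]

open scoped Classical in
lemma twistEq : GroupAlgebra.TwistEq (A × (A →* ℂˣ)) (GroupAlgebra.fourierTwist A 1) := by
  rw [GroupAlgebra.TwistEq]
  have h1 : (1 : MonoidAlgebra ℂ (A × (A →* ℂˣ)))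
      = MonoidAlgebra.of ℂ (A × (A →* ℂˣ)) (1, 1) := by
    rw [Prod.mk_one_one, map_one]
  have L1 : (Algebra.TensorProduct.assoc ℂ ℂ ℂ (MonoidAlgebra ℂ (A × (A →* ℂˣ)))
        (MonoidAlgebra ℂ (A × (A →* ℂˣ))) (MonoidAlgebra ℂ (A × (A →* ℂˣ))))
      ((Algebra.TensorProduct.map (GroupAlgebra.comul (A × (A →* ℂˣ)))
        (AlgHom.id ℂ (MonoidAlgebra ℂ (A × (A →* ℂˣ))))) (GroupAlgebra.fourierTwist A 1))
      = (Fintype.card A : ℂ)⁻¹ • ∑ p : A × (A →* ℂˣ), ((p.2 p.1 : ℂ)) •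
          (MonoidAlgebra.of ℂ (A × (A →* ℂˣ)) (p.1, 1) ⊗ₜ[ℂ]
            (MonoidAlgebra.of ℂ (A × (A →* ℂˣ)) (p.1, 1) ⊗ₜ[ℂ]
             MonoidAlgebra.of ℂ (A × (A →* ℂˣ)) (1, p.2))) := by
    rw [tw]
    simp only [map_smul, map_sum, E, Algebra.TensorProduct.map_tmul, AlgHom.coe_id, id_eq,
      comul_of, Algebra.TensorProduct.assoc_tmul, zpow_one]
  have L2 : (Algebra.TensorProduct.assoc ℂ ℂ ℂ (MonoidAlgebra ℂ (A × (A →* ℂˣ)))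
        (MonoidAlgebra ℂ (A × (A →* ℂˣ))) (MonoidAlgebra ℂ (A × (A →* ℂˣ))))
      (GroupAlgebra.fourierTwist A 1 ⊗ₜ[ℂ] (1 : MonoidAlgebra ℂ (A × (A →* ℂˣ))))
      = (Fintype.card A : ℂ)⁻¹ • ∑ p : A × (A →* ℂˣ), ((p.2 p.1 : ℂ)) •
          (MonoidAlgebra.of ℂ (A × (A →* ℂˣ)) (p.1, 1) ⊗ₜ[ℂ]
            (MonoidAlgebra.of ℂ (A × (A →* ℂˣ)) (1, p.2) ⊗ₜ[ℂ]
             MonoidAlgebra.of ℂ (A × (A →* ℂˣ)) (1, 1))) := by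
    rw [tw, h1]
    simp only [← smul_tmul', sum_tmul, map_smul, map_sum, E,
      Algebra.TensorProduct.assoc_tmul, zpow_one]
  have R1 : (Algebra.TensorProduct.map (AlgHom.id ℂ (MonoidAlgebra ℂ (A × (A →* ℂˣ))))
        (GroupAlgebra.comul (A × (A →* ℂˣ)))) (GroupAlgebra.fourierTwist A 1)
      = (Fintype.card A : ℂ)⁻¹ • ∑ p : A × (A →* ℂˣ), ((p.2 p.1 : ℂ)) •
          (MonoidAlgebra.of ℂ (A × (A →* ℂˣ)) (p.1, 1) ⊗ₜ[ℂ]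
            (MonoidAlgebra.of ℂ (A × (A →* ℂˣ)) (1, p.2) ⊗ₜ[ℂ]
             MonoidAlgebra.of ℂ (A × (A →* ℂˣ)) (1, p.2))) := by
    rw [tw]
    simp only [map_smul, map_sum, E, Algebra.TensorProduct.map_tmul, AlgHom.coe_id, id_eq,
      comul_of, zpow_one]
  have R2 : (1 : MonoidAlgebra ℂ (A × (A →* ℂˣ))) ⊗ₜ[ℂ] GroupAlgebra.fourierTwist A 1
      = (Fintype.card A : ℂ)⁻¹ • ∑ p : A × (A →* ℂˣ), ((p.2 p.1 : ℂ)) •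
          (MonoidAlgebra.of ℂ (A × (A →* ℂˣ)) (1, 1) ⊗ₜ[ℂ]
            (MonoidAlgebra.of ℂ (A × (A →* ℂˣ)) (p.1, 1) ⊗ₜ[ℂ]
             MonoidAlgebra.of ℂ (A × (A →* ℂˣ)) (1, p.2))) := by
    rw [tw, h1]
    simp only [tmul_smul, tmul_sum, E, zpow_one]
  rw [L1, L2, R1, R2, smul_mul_smul_comm, smul_mul_smul_comm,
    Finset.sum_mul_sum, Finset.sum_mul_sum]
  simp only [smul_mul_smul_comm, Algebra.TensorProduct.tmul_mul_tmul, ← map_mul,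
    Prod.mk_mul_mk, one_mul, mul_one]
  congr 1
  rw [← Fintype.sum_prod_type', ← Fintype.sum_prod_type']
  refine Fintype.sum_equiv
    (⟨fun r => ((r.1.1 * r.2.1, r.2.2), (r.1.1, r.2.2⁻¹ * r.1.2)),
      fun r => ((r.2.1, r.1.2 * r.2.2), (r.2.1⁻¹ * r.1.1, r.1.2)),
      by rintro ⟨⟨x, χ⟩, ⟨y, ψ⟩⟩; simp,
      by rintro ⟨⟨x, χ⟩, ⟨y, ψ⟩⟩; simp⟩ :
        ((A × (A →* ℂˣ)) × (A × (A →* ℂˣ))) ≃ ((A × (A →* ℂˣ)) × (A × (A →* ℂˣ))))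
    _ _ ?_
  rintro ⟨⟨x, χ⟩, ⟨y, ψ⟩⟩
  simp only [Equiv.coe_fn_mk]
  rw [mul_inv_cancel_left]
  congr 1
  have h2 : ((ψ x : ℂ)) ≠ 0 := Units.ne_zero _
  simp only [map_mul, MonoidHom.mul_apply, MonoidHom.inv_apply, map_inv, Units.val_mul,
    Units.val_inv_eq_inv_val]
  field_simp

lemma invariant {G : Type*} [Group G] (ρ : G →* MulAut A)
    (φt : G →* MulAut (A →* ℂˣ))
    (ρt : ((A →* ℂˣ) ⋊[φt] G) →* MulAut (A × (A →* ℂˣ)))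
    (hρt : ∀ (χ : A →* ℂˣ) (g : G) (a : A) (ψ : A →* ℂˣ),
      ρt (⟨χ, g⟩ : (A →* ℂˣ) ⋊[φt] G) (a, ψ)
        = ((ρ g) a, ψ.comp ((ρ g)⁻¹ : A ≃* A).toMonoidHom))
    (gt : (A →* ℂˣ) ⋊[φt] G) :
    TensorProduct.map
        (GroupAlgebra.transport (A × (A →* ℂˣ)) (A × (A →* ℂˣ)) ⇑(ρt gt))
        (GroupAlgebra.transport (A × (A →* ℂˣ)) (A × (A →* ℂˣ)) ⇑(ρt gt))
      (GroupAlgebra.fourierTwist A 1) = GroupAlgebra.fourierTwist A 1 := by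
  have k1 : ∀ x : A, ρt gt (x, 1) = ((ρ gt.right) x, 1) := by
    intro x
    rw [show gt = ⟨gt.left, gt.right⟩ from rfl, hρt]
    simp
  have k2 : ∀ χ : A →* ℂˣ,
      ρt gt (1, χ) = (1, χ.comp ((ρ gt.right)⁻¹ : A ≃* A).toMonoidHom) := by
    intro χ
    rw [show gt = ⟨gt.left, gt.right⟩ from rfl, hρt]
    simp
  have T1 : ∀ u : A × (A →* ℂˣ),
      (GroupAlgebra.transport (A × (A →* ℂˣ)) (A × (A →* ℂˣ)) ⇑(ρt gt))
          (MonoidAlgebra.of ℂ (A × (A →* ℂˣ)) u)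
        = MonoidAlgebra.of ℂ (A × (A →* ℂˣ)) (ρt gt u) := by
    intro u
    exact MonoidAlgebra.mapDomainLinearMap_single _ _ _
  rw [tw]
  simp only [map_smul, map_sum, E, TensorProduct.map_tmul, T1, k1, k2, zpow_one]
  congr 1
  refine Fintype.sum_equiv
    (Equiv.prodCongr ((ρ gt.right : A ≃* A)).toEquiv
      (⟨fun χ => χ.comp ((ρ gt.right)⁻¹ : A ≃* A).toMonoidHom,
        fun χ => χ.comp ((ρ gt.right : A ≃* A)).toMonoidHom,
        fun χ => by ext a; simp [MulAut.inv_def],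
        fun χ => by ext a; simp [MulAut.inv_def]⟩ : (A →* ℂˣ) ≃ (A →* ℂˣ)))
    _ _ ?_
  rintro ⟨x, χ⟩
  simp [MulAut.inv_def]

end FourierAux

/-- Let `A` be a finite abelian group with character group `A* = Hom(A, ℂˣ)`, `Ã = A × A*`, and
let `G̃ = G ⋉ A*` act on `Ã` by `(χ,g)·(a,ψ) = (ρ(g)(a), ψ ∘ ρ(g)⁻¹)`.  Then
`J = |A|⁻¹ Σ_{x,χ} χ(x) (x,1) ⊗ (1,χ)` is a twist for `ℂ[Ã]` — in particular invertible with
inverse `|A|⁻¹ Σ_{x,χ} χ(x)⁻¹ (x,1) ⊗ (1,χ)` — and `J` is invariant under the action of `G̃`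
(extended `ℂ`-linearly to both tensor factors). -/
theorem fourier_twist_isTwist_and_invariant
    (G A : Type*) [Group G] [CommGroup A] [Fintype A] [Fintype (A →* ℂˣ)]
    (ρ : G →* MulAut A)
    (φt : G →* MulAut (A →* ℂˣ))
    (hφt : ∀ (g : G) (χ : A →* ℂˣ) (a : A), (φt g χ) a = χ ((ρ g)⁻¹ a))
    (ρt : ((A →* ℂˣ) ⋊[φt] G) →* MulAut (A × (A →* ℂˣ)))
    (hρt : ∀ (χ : A →* ℂˣ) (g : G) (a : A) (ψ : A →* ℂˣ),
      ρt (⟨χ, g⟩ : (A →* ℂˣ) ⋊[φt] G) (a, ψ)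
        = ((ρ g) a, ψ.comp ((ρ g)⁻¹ : A ≃* A).toMonoidHom)) :
    GroupAlgebra.IsTwist (A × (A →* ℂˣ)) (GroupAlgebra.fourierTwist A 1) ∧
    GroupAlgebra.MulEqOne (A × (A →* ℂˣ))
      (GroupAlgebra.fourierTwist A 1) (GroupAlgebra.fourierTwist A (-1)) ∧
    GroupAlgebra.MulEqOne (A × (A →* ℂˣ))
      (GroupAlgebra.fourierTwist A (-1)) (GroupAlgebra.fourierTwist A 1) ∧
    ∀ gt : (A →* ℂˣ) ⋊[φt] G,
      TensorProduct.map
          (GroupAlgebra.transport (A × (A →* ℂˣ)) (A × (A →* ℂˣ)) ⇑(ρt gt))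
          (GroupAlgebra.transport (A × (A →* ℂˣ)) (A × (A →* ℂˣ)) ⇑(ρt gt))
        (GroupAlgebra.fourierTwist A 1)
      = GroupAlgebra.fourierTwist A 1 := by
  refine ⟨⟨?_, ?_, ?_⟩, ?_, ?_, ?_⟩
  · exact IsUnit.of_mul_eq_one _ FourierAux.J_mul_J
  · exact FourierAux.twistEq
  · exact FourierAux.counitEq
  · exact FourierAux.J_mul_J
  · exact FourierAux.J_mul_J'
  · intro gt
    exact FourierAux.invariant ρ φt ρt hρt gt
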